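/- arXiv:1701.05030 — 2 statements merged into one kernel-verified Lean document; each statement's English description precedes it below -/
import Mathlib

section
/- For every integer n ≥ 1, La(n, ∨, P_2) = La(n, ∧, P_2) = C(n, ⌊n/2⌋): the maximum, over all families ℱ ⊆ 2^[n] containing no copy of ∨ (respectively, no copy of ∧), of the number of copies of P_2 in ℱ (i.e. of pairs of distinct sets A, B ∈ ℱ with A ⊆ B) equals the binomial coefficient C(n, ⌊n/2⌋). -/
open Classical Finset

noncomputable section

/-- `G` is a copy of the finite poset `α` among the subsets of `[n]`:
there is a bijection `φ` from `α` onto `G` such that `x ≤ y` implies `φ x ⊆ φ y`. -/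
def IsCopy (α : Type) [PartialOrder α] [Fintype α] {n : ℕ}
    (G : Finset (Finset (Fin n))) : Prop :=
  ∃ φ : α → Finset (Fin n), Function.Injective φ ∧
    Finset.image φ Finset.univ = G ∧ ∀ x y : α, x ≤ y → φ x ⊆ φ y

/-- `copyCount α F` is the number of copies of the poset `α` in the family `F`,
copies being counted as subfamilies of `F`. -/
def copyCount (α : Type) [PartialOrder α] [Fintype α] {n : ℕ}
    (F : Finset (Finset (Fin n))) : ℕ :=
  (F.powerset.filter fun G => IsCopy α G).card

/-- `La n P Q`: the maximum number of copies of `Q` in a `P`-free family of subsets of `[n]`. -/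
def La (n : ℕ) (P Q : Type) [PartialOrder P] [Fintype P]
    [PartialOrder Q] [Fintype Q] : ℕ :=
  ((Finset.univ : Finset (Finset (Finset (Fin n)))).filter fun F =>
    copyCount P F = 0).sup (copyCount Q)

/-- `La2 n P₁ P₂ Q`: the maximum number of copies of `Q` in a family of subsets of `[n]`
that is both `P₁`-free and `P₂`-free. -/
def La2 (n : ℕ) (P₁ P₂ Q : Type) [PartialOrder P₁] [Fintype P₁]
    [PartialOrder P₂] [Fintype P₂] [PartialOrder Q] [Fintype Q] : ℕ :=
  ((Finset.univ : Finset (Finset (Finset (Fin n)))).filter fun F =>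
    copyCount P₁ F = 0 ∧ copyCount P₂ F = 0).sup (copyCount Q)

/-- the full `k`-th level of `2^[n]`. -/
def level (n k : ℕ) : Finset (Finset (Fin n)) :=
  Finset.univ.filter fun A => A.card = k

/-- `γ^r_{i,j}(F)`: the number of `r`-element subfamilies of `F` whose intersection has
size `i` and whose union has size `j`. -/
def gammaCount (r n i j : ℕ) (F : Finset (Finset (Fin n))) : ℕ :=
  (F.powerset.filter fun G =>
    G.card = r ∧ (G.inf id).card = i ∧ (G.sup id).card = j).card

/-- `β^r_i(F)`: the number of `r`-element subfamilies of `F` whose intersection has size `i`. -/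
def betaCount (r n i : ℕ) (F : Finset (Finset (Fin n))) : ℕ :=
  (F.powerset.filter fun G => G.card = r ∧ (G.inf id).card = i).card

/-- the complete multi-level poset `K_{r 0, …, r (s-1)}`: level `i` has `r i` elements,
and every element of level `i` is below every element of level `j` whenever `i < j`. -/
def KP {s : ℕ} (r : Fin s → ℕ) : Type := Σ i, Fin (r i)

namespace KP

variable {s : ℕ} {r : Fin s → ℕ}

def le (x y : KP r) : Prop := x = y ∨ x.1 < y.1

instance : PartialOrder (KP r) where
  le := KP.le
  le_refl x := Or.inl rfl
  le_trans x y z hxy hyz := by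
    rcases hxy with rfl | h
    · exact hyz
    · rcases hyz with rfl | h'
      · exact Or.inr h
      · exact Or.inr (h.trans h')
  le_antisymm x y hxy hyx := by
    rcases hxy with rfl | h
    · rfl
    · rcases hyx with rfl | h'
      · rfl
      · exact absurd (h.trans h') (lt_irrefl _)

instance : Fintype (KP r) := inferInstanceAs (Fintype (Σ i, Fin (r i)))

end KP

/-- the chain (totally ordered poset) with `k` elements. -/
abbrev PChain (k : ℕ) := Fin k

/-- `∨_r = K_{1,r}` -/
abbrev VeePoset (r : ℕ) := KP ![1, r]

/-- `∧_r = K_{r,1}` -/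
abbrev WedgePoset (r : ℕ) := KP ![r, 1]

/-- the generalized diamond `D_r = K_{1,r,1}` -/
abbrev DiamondPoset (r : ℕ) := KP ![1, r, 1]

/-- the butterfly poset `B = K_{2,2}` -/
abbrev Butterfly := KP ![2, 2]

/-- the height `l(Q)` of a finite poset: the number of elements of a longest chain. -/
def height (Q : Type) [PartialOrder Q] [Fintype Q] : ℕ :=
  ((Finset.univ : Finset (Finset Q)).filter fun C : Finset Q =>
    IsChain (· ≤ ·) (↑C : Set Q)).sup Finset.card


/-- `Q₁ ⊗_r Q₂`: disjoint copies of `Q₁` and `Q₂` with an `r`-element antichain in between;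
everything in `Q₁` is below the middle elements and below everything in `Q₂`,
and the middle elements are below everything in `Q₂`. -/
inductive Otimes (Q₁ Q₂ : Type) (r : ℕ) : Type
  | bot : Q₁ → Otimes Q₁ Q₂ r
  | mid : Fin r → Otimes Q₁ Q₂ r
  | top : Q₂ → Otimes Q₁ Q₂ r

namespace Otimes

variable {Q₁ Q₂ : Type} {r : ℕ}

def le [PartialOrder Q₁] [PartialOrder Q₂] : Otimes Q₁ Q₂ r → Otimes Q₁ Q₂ r → Prop
  | bot a, bot b => a ≤ b
  | bot _, mid _ => True
  | bot _, top _ => True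
  | mid i, mid j => i = j
  | mid _, top _ => True
  | top a, top b => a ≤ b
  | _, _ => False

instance [PartialOrder Q₁] [PartialOrder Q₂] : PartialOrder (Otimes Q₁ Q₂ r) where
  le := Otimes.le
  le_refl x := by cases x <;> simp [Otimes.le]
  le_trans x y z hxy hyz := by
    cases x <;> cases y <;> cases z <;> simp_all [Otimes.le] <;>
      first
        | exact le_trans hxy hyz
        | trivial
  le_antisymm x y hxy hyx := by
    cases x <;> cases y <;> simp_all [Otimes.le] <;>
      first
        | exact le_antisymm hxy hyx
        | rfl

instance [Fintype Q₁] [Fintype Q₂] : Fintype (Otimes Q₁ Q₂ r) :=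
  Fintype.ofEquiv (Q₁ ⊕ Fin r ⊕ Q₂)
    { toFun := fun x => match x with
        | Sum.inl a => bot a
        | Sum.inr (Sum.inl i) => mid i
        | Sum.inr (Sum.inr b) => top b
      invFun := fun x => match x with
        | bot a => Sum.inl a
        | mid i => Sum.inr (Sum.inl i)
        | top b => Sum.inr (Sum.inr b)
      left_inv := fun x => by rcases x with a | (i | b) <;> rfl
      right_inv := fun x => by cases x <;> rfl }

end Otimes

/-- `Q ⊕ r`: the poset obtained from `Q` by adding an antichain of `r` new elements,
each above every element of `Q`. -/
inductive Oplus (Q : Type) (r : ℕ) : Type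
  | base : Q → Oplus Q r
  | new : Fin r → Oplus Q r

namespace Oplus

variable {Q : Type} {r : ℕ}

def le [PartialOrder Q] : Oplus Q r → Oplus Q r → Prop
  | base a, base b => a ≤ b
  | base _, new _ => True
  | new i, new j => i = j
  | new _, base _ => False

instance [PartialOrder Q] : PartialOrder (Oplus Q r) where
  le := Oplus.le
  le_refl x := by cases x <;> simp [Oplus.le]
  le_trans x y z hxy hyz := by
    cases x <;> cases y <;> cases z <;> simp_all [Oplus.le] <;>
      first
        | exact le_trans hxy hyz
        | trivial
  le_antisymm x y hxy hyx := by
    cases x <;> cases y <;> simp_all [Oplus.le] <;>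
      first
        | exact le_antisymm hxy hyx
        | rfl

instance [Fintype Q] : Fintype (Oplus Q r) :=
  Fintype.ofEquiv (Q ⊕ Fin r)
    { toFun := fun x => match x with
        | Sum.inl a => base a
        | Sum.inr i => new i
      invFun := fun x => match x with
        | base a => Sum.inl a
        | new i => Sum.inr i
      left_inv := fun x => by rcases x with a | i <;> rfl
      right_inv := fun x => by cases x <;> rfl }

end Oplus

/-- the poset `N`: four elements `a, b, c, d` with `a ≤ c`, `b ≤ c`, `b ≤ d`
and no other nontrivial relations. -/
inductive NPoset : Type
  | a | b | c | d
  deriving DecidableEq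

instance : Fintype NPoset :=
  Fintype.ofList [NPoset.a, NPoset.b, NPoset.c, NPoset.d] (fun x => by cases x <;> simp)

namespace NPoset

def le : NPoset → NPoset → Prop := fun x y =>
  x = y ∨ (x = a ∧ y = c) ∨ (x = b ∧ y = c) ∨ (x = b ∧ y = d)

instance : DecidableRel le := fun x y => by unfold le; infer_instance

theorem le_refl' : ∀ x : NPoset, le x x := by decide
theorem le_trans' : ∀ x y z : NPoset, le x y → le y z → le x z := by decide
theorem le_antisymm' : ∀ x y : NPoset, le x y → le y x → x = y := by decide

instance : PartialOrder NPoset :=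
  { le := le, le_refl := le_refl', le_trans := le_trans', le_antisymm := le_antisymm' }

end NPoset

/-- the poset `B⁺`: five elements with `a < c`, `a < e`, `b < c`, `b < d`, `d < e`
(and the relation `b < e` forced by transitivity). -/
inductive BPlusPoset : Type
  | a | b | c | d | e
  deriving DecidableEq

instance : Fintype BPlusPoset :=
  Fintype.ofList [BPlusPoset.a, BPlusPoset.b, BPlusPoset.c, BPlusPoset.d, BPlusPoset.e] (fun x => by cases x <;> simp)

namespace BPlusPoset

def le : BPlusPoset → BPlusPoset → Prop := fun x y =>
  x = y ∨ (x = a ∧ y = c) ∨ (x = a ∧ y = e) ∨ (x = b ∧ y = c) ∨ (x = b ∧ y = d) ∨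
    (x = b ∧ y = e) ∨ (x = d ∧ y = e)

instance : DecidableRel le := fun x y => by unfold le; infer_instance

theorem le_refl' : ∀ x : BPlusPoset, le x x := by decide
theorem le_trans' : ∀ x y z : BPlusPoset, le x y → le y z → le x z := by decide
theorem le_antisymm' : ∀ x y : BPlusPoset, le x y → le y x → x = y := by decide

instance : PartialOrder BPlusPoset :=
  { le := le, le_refl := le_refl', le_trans := le_trans', le_antisymm := le_antisymm' }

end BPlusPoset

/-- the poset `B⁺⁺`: five elements with `a, b < c, d` and `d < e`
(hence also `a < e` and `b < e`). -/
inductive BPlusPlusPoset : Type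
  | a | b | c | d | e
  deriving DecidableEq

instance : Fintype BPlusPlusPoset :=
  Fintype.ofList [BPlusPlusPoset.a, BPlusPlusPoset.b, BPlusPlusPoset.c, BPlusPlusPoset.d, BPlusPlusPoset.e] (fun x => by cases x <;> simp)

namespace BPlusPlusPoset

def le : BPlusPlusPoset → BPlusPlusPoset → Prop := fun x y =>
  x = y ∨ (x = a ∧ y = c) ∨ (x = a ∧ y = d) ∨ (x = a ∧ y = e) ∨ (x = b ∧ y = c) ∨
    (x = b ∧ y = d) ∨ (x = b ∧ y = e) ∨ (x = d ∧ y = e)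

instance : DecidableRel le := fun x y => by unfold le; infer_instance

theorem le_refl' : ∀ x : BPlusPlusPoset, le x x := by decide
theorem le_trans' : ∀ x y z : BPlusPlusPoset, le x y → le y z → le x z := by decide
theorem le_antisymm' : ∀ x y : BPlusPlusPoset, le x y → le y x → x = y := by decide

instance : PartialOrder BPlusPlusPoset :=
  { le := le, le_refl := le_refl', le_trans := le_trans', le_antisymm := le_antisymm' }

end BPlusPlusPoset

/-- the binary entropy function `h(x) = -x log₂ x - (1-x) log₂ (1-x)`. -/
def binEnt (x : ℝ) : ℝ := -x * Real.logb 2 x - (1 - x) * Real.logb 2 (1 - x)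



section Aux
variable {n : ℕ}

lemma KP.ext'' {s : ℕ} {r : Fin s → ℕ} {x y : KP r} (h1 : x.1 = y.1)
    (h2 : (x.2 : ℕ) = (y.2 : ℕ)) : x = y := by
  rcases x with ⟨i, a⟩
  rcases y with ⟨j, b⟩
  dsimp at h1 h2
  subst h1
  exact congrArg (Sigma.mk i) (Fin.ext h2)

def v0 : VeePoset 2 := ⟨0, ⟨0, by norm_num⟩⟩
def v1 : VeePoset 2 := ⟨1, ⟨0, by norm_num⟩⟩
def v2 : VeePoset 2 := ⟨1, ⟨1, by norm_num⟩⟩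

def kpval {s : ℕ} {r : Fin s → ℕ} (x : KP r) : ℕ × ℕ := ((x.1 : ℕ), (x.2 : ℕ))

lemma v01 : v0 ≠ v1 := fun h => by have := congrArg kpval h; simp [v0, v1, kpval, Prod.ext_iff] at this
lemma v02 : v0 ≠ v2 := fun h => by have := congrArg kpval h; simp [v0, v2, kpval, Prod.ext_iff] at this
lemma v12 : v1 ≠ v2 := fun h => by have := congrArg kpval h; simp [v1, v2, kpval, Prod.ext_iff] at this
lemma v0le1 : v0 ≤ v1 := Or.inr (by simp [v0, v1, Fin.lt_def])
lemma v0le2 : v0 ≤ v2 := Or.inr (by simp [v0, v2, Fin.lt_def])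

lemma vee_cases : ∀ x : VeePoset 2, x = v0 ∨ x = v1 ∨ x = v2 := by
  rintro ⟨i, a⟩
  by_cases h0 : (i : ℕ) = 0
  · have hi : i = 0 := Fin.ext h0
    subst hi
    have ha : (a : ℕ) < 1 := by simpa using a.isLt
    exact Or.inl (KP.ext'' rfl (Nat.lt_one_iff.mp ha))
  · have hi : i = 1 := Fin.ext (by have h2 : (i : ℕ) < 2 := i.isLt; exact (by omega : (i : ℕ) = 1))
    subst hi
    have ha : (a : ℕ) < 2 := by simpa using a.isLt
    by_cases h2 : (a : ℕ) = 0
    · exact Or.inr (Or.inl (KP.ext'' rfl (by simp only [v1]; omega)))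
    · exact Or.inr (Or.inr (KP.ext'' rfl (by simp only [v2]; omega)))

def w0 : WedgePoset 2 := ⟨0, ⟨0, by norm_num⟩⟩
def w1 : WedgePoset 2 := ⟨0, ⟨1, by norm_num⟩⟩
def w2 : WedgePoset 2 := ⟨1, ⟨0, by norm_num⟩⟩

lemma w01 : w0 ≠ w1 := fun h => by have := congrArg kpval h; simp [w0, w1, kpval, Prod.ext_iff] at this
lemma w02 : w0 ≠ w2 := fun h => by have := congrArg kpval h; simp [w0, w2, kpval, Prod.ext_iff] at this
lemma w12 : w1 ≠ w2 := fun h => by have := congrArg kpval h; simp [w1, w2, kpval, Prod.ext_iff] at this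
lemma w0le2 : w0 ≤ w2 := Or.inr (by simp [w0, w2, Fin.lt_def])
lemma w1le2 : w1 ≤ w2 := Or.inr (by simp [w1, w2, Fin.lt_def])

lemma wedge_cases : ∀ x : WedgePoset 2, x = w0 ∨ x = w1 ∨ x = w2 := by
  rintro ⟨i, a⟩
  by_cases h0 : (i : ℕ) = 0
  · have hi : i = 0 := Fin.ext h0
    subst hi
    have ha : (a : ℕ) < 2 := by simpa using a.isLt
    by_cases h2 : (a : ℕ) = 0
    · exact Or.inl (KP.ext'' rfl (by simp only [w0]; omega))
    · exact Or.inr (Or.inl (KP.ext'' rfl (by simp only [w1]; omega)))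
  · have hi : i = 1 := Fin.ext (by have h2 : (i : ℕ) < 2 := i.isLt; exact (by omega : (i : ℕ) = 1))
    subst hi
    have ha : (a : ℕ) < 1 := by simpa using a.isLt
    exact Or.inr (Or.inr (KP.ext'' rfl (Nat.lt_one_iff.mp ha)))

end Aux
section Aux2
variable {n : ℕ}

lemma fin2_cases : ∀ x : Fin 2, x = 0 ∨ x = 1 := by
  intro x
  have h2 : (x : ℕ) < 2 := x.isLt
  by_cases h : (x : ℕ) = 0
  · exact Or.inl (Fin.ext h)
  · exact Or.inr (Fin.ext (by exact (by omega : (x : ℕ) = 1)))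

lemma isCopy_chain2_iff {G : Finset (Finset (Fin n))} :
    IsCopy (PChain 2) G ↔ ∃ X Y : Finset (Fin n), X ≠ Y ∧ X ⊆ Y ∧ G = {X, Y} := by
  constructor
  · rintro ⟨φ, hinj, himg, hmono⟩
    refine ⟨φ 0, φ 1, fun h => (by norm_num : (0 : Fin 2) ≠ 1) (hinj h),
      hmono 0 1 (Fin.zero_le 1), ?_⟩
    rw [← himg]
    apply Finset.Subset.antisymm
    · intro A hA
      obtain ⟨x, -, rfl⟩ := Finset.mem_image.mp hA
      rcases fin2_cases x with rfl | rfl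
      · exact Finset.mem_insert_self _ _
      · exact Finset.mem_insert_of_mem (Finset.mem_singleton_self _)
    · intro A hA
      rcases Finset.mem_insert.mp hA with rfl | hA
      · exact Finset.mem_image_of_mem _ (Finset.mem_univ _)
      · rw [Finset.mem_singleton.mp hA]
        exact Finset.mem_image_of_mem _ (Finset.mem_univ _)
  · rintro ⟨X, Y, hne, hsub, rfl⟩
    refine ⟨fun i => if i = 0 then X else Y, ?_, ?_, ?_⟩
    · intro i j h
      rcases fin2_cases i with rfl | rfl <;> rcases fin2_cases j with rfl | rfl <;>
        simp_all
    · apply Finset.Subset.antisymm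
      · intro A hA
        obtain ⟨x, -, rfl⟩ := Finset.mem_image.mp hA
        rcases fin2_cases x with rfl | rfl
        · simp
        · simp
      · intro A hA
        rcases Finset.mem_insert.mp hA with rfl | hA
        · exact Finset.mem_image.mpr ⟨0, Finset.mem_univ _, by simp⟩
        · rw [Finset.mem_singleton.mp hA]
          exact Finset.mem_image.mpr ⟨1, Finset.mem_univ _, by simp⟩
    · intro x y hxy
      rcases fin2_cases x with rfl | rfl <;> rcases fin2_cases y with rfl | rfl
      · simp
      · simpa using hsub
      · exact absurd hxy (by norm_num)
      · simp

lemma vfst0 : ((v0 : VeePoset 2).1 : ℕ) = 0 := rfl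
lemma vfst1 : ((v1 : VeePoset 2).1 : ℕ) = 1 := rfl
lemma vfst2 : ((v2 : VeePoset 2).1 : ℕ) = 1 := rfl
lemma wfst0 : ((w0 : WedgePoset 2).1 : ℕ) = 0 := rfl
lemma wfst1 : ((w1 : WedgePoset 2).1 : ℕ) = 0 := rfl
lemma wfst2 : ((w2 : WedgePoset 2).1 : ℕ) = 1 := rfl

lemma vee_of {A B C : Finset (Fin n)} (hAB : A ≠ B) (hAC : A ≠ C) (hBC : B ≠ C)
    (h1 : A ⊆ B) (h2 : A ⊆ C) : IsCopy (VeePoset 2) ({A, B, C} : Finset (Finset (Fin n))) := by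
  refine ⟨fun x => if x = v0 then A else if x = v1 then B else C, ?_, ?_, ?_⟩
  · intro x y h
    rcases vee_cases x with rfl | rfl | rfl <;> rcases vee_cases y with rfl | rfl | rfl <;>
      simp_all [v01, v02, v12, v01.symm, v02.symm, v12.symm]
  · apply Finset.Subset.antisymm
    · intro D hD
      obtain ⟨x, -, rfl⟩ := Finset.mem_image.mp hD
      rcases vee_cases x with rfl | rfl | rfl <;>
        simp [v01, v02, v12, v01.symm, v02.symm, v12.symm]
    · intro D hD
      simp only [Finset.mem_insert, Finset.mem_singleton] at hD
      rcases hD with rfl | rfl | rfl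
      · exact Finset.mem_image.mpr ⟨v0, Finset.mem_univ _, by simp⟩
      · exact Finset.mem_image.mpr ⟨v1, Finset.mem_univ _, by simp [v01.symm, v12]⟩
      · exact Finset.mem_image.mpr ⟨v2, Finset.mem_univ _, by simp [v02.symm, v12.symm]⟩
  · intro x y hxy
    rcases hxy with rfl | h
    · exact subset_rfl
    · have hfst := Fin.lt_def.mp h
      rcases vee_cases x with rfl | rfl | rfl <;> rcases vee_cases y with rfl | rfl | rfl <;>
        first
          | exact absurd hfst (by simp only [vfst0, vfst1, vfst2]; omega)
          | (simp only [v01.symm, v02.symm, v12, v12.symm, if_pos rfl]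
             first | exact h1 | exact h2)

end Aux2
section Aux3
variable {n : ℕ}

lemma wedge_of {A B C : Finset (Fin n)} (hAB : A ≠ B) (hAC : A ≠ C) (hBC : B ≠ C)
    (h1 : A ⊆ C) (h2 : B ⊆ C) : IsCopy (WedgePoset 2) ({A, B, C} : Finset (Finset (Fin n))) := by
  refine ⟨fun x => if x = w0 then A else if x = w1 then B else C, ?_, ?_, ?_⟩
  · intro x y h
    rcases wedge_cases x with rfl | rfl | rfl <;> rcases wedge_cases y with rfl | rfl | rfl <;>
      simp_all [w01, w02, w12, w01.symm, w02.symm, w12.symm]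
  · apply Finset.Subset.antisymm
    · intro D hD
      obtain ⟨x, -, rfl⟩ := Finset.mem_image.mp hD
      rcases wedge_cases x with rfl | rfl | rfl <;>
        simp [w01, w02, w12, w01.symm, w02.symm, w12.symm]
    · intro D hD
      simp only [Finset.mem_insert, Finset.mem_singleton] at hD
      rcases hD with rfl | rfl | rfl
      · exact Finset.mem_image.mpr ⟨w0, Finset.mem_univ _, by simp⟩
      · exact Finset.mem_image.mpr ⟨w1, Finset.mem_univ _, by simp [w01.symm, w12]⟩
      · exact Finset.mem_image.mpr ⟨w2, Finset.mem_univ _, by simp [w02.symm, w12.symm]⟩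
  · intro x y hxy
    rcases hxy with rfl | h
    · exact subset_rfl
    · have hfst := Fin.lt_def.mp h
      rcases wedge_cases x with rfl | rfl | rfl <;> rcases wedge_cases y with rfl | rfl | rfl <;>
        first
          | exact absurd hfst (by simp only [wfst0, wfst1, wfst2]; omega)
          | (simp only [w01, w02, w12, w01.symm, w02.symm, w12.symm, if_pos rfl]
             first | exact h1 | exact h2)

lemma vee_extract {G : Finset (Finset (Fin n))} (h : IsCopy (VeePoset 2) G) :
    ∃ A B C : Finset (Fin n), A ∈ G ∧ B ∈ G ∧ C ∈ G ∧ A ≠ B ∧ A ≠ C ∧ B ≠ C ∧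
      A ⊆ B ∧ A ⊆ C := by
  obtain ⟨φ, hinj, himg, hmono⟩ := h
  exact ⟨φ v0, φ v1, φ v2,
    himg ▸ Finset.mem_image_of_mem _ (Finset.mem_univ _),
    himg ▸ Finset.mem_image_of_mem _ (Finset.mem_univ _),
    himg ▸ Finset.mem_image_of_mem _ (Finset.mem_univ _),
    hinj.ne v01, hinj.ne v02, hinj.ne v12, hmono _ _ v0le1, hmono _ _ v0le2⟩

lemma wedge_extract {G : Finset (Finset (Fin n))} (h : IsCopy (WedgePoset 2) G) :
    ∃ A B C : Finset (Fin n), A ∈ G ∧ B ∈ G ∧ C ∈ G ∧ A ≠ B ∧ A ≠ C ∧ B ≠ C ∧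
      A ⊆ C ∧ B ⊆ C := by
  obtain ⟨φ, hinj, himg, hmono⟩ := h
  exact ⟨φ w0, φ w1, φ w2,
    himg ▸ Finset.mem_image_of_mem _ (Finset.mem_univ _),
    himg ▸ Finset.mem_image_of_mem _ (Finset.mem_univ _),
    himg ▸ Finset.mem_image_of_mem _ (Finset.mem_univ _),
    hinj.ne w01, hinj.ne w02, hinj.ne w12, hmono _ _ w0le2, hmono _ _ w1le2⟩

/-- usable form of Vee-freeness -/
lemma vee_free_forall {F : Finset (Finset (Fin n))} (hF : copyCount (VeePoset 2) F = 0) :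
    ∀ A B C : Finset (Fin n), A ∈ F → B ∈ F → C ∈ F → A ≠ B → A ≠ C → B ≠ C →
      A ⊆ B → A ⊆ C → False := by
  intro A B C hA hB hC hAB hAC hBC h1 h2
  have hempty := Finset.card_eq_zero.mp hF
  have hmem : ({A, B, C} : Finset (Finset (Fin n))) ∈
      F.powerset.filter fun G => IsCopy (VeePoset 2) G := by
    refine Finset.mem_filter.mpr ⟨Finset.mem_powerset.mpr ?_, vee_of hAB hAC hBC h1 h2⟩
    intro D hD
    simp only [Finset.mem_insert, Finset.mem_singleton] at hD
    rcases hD with rfl | rfl | rfl <;> assumption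
  rw [hempty] at hmem
  exact absurd hmem (Finset.notMem_empty _)

lemma wedge_free_forall {F : Finset (Finset (Fin n))} (hF : copyCount (WedgePoset 2) F = 0) :
    ∀ A B C : Finset (Fin n), A ∈ F → B ∈ F → C ∈ F → A ≠ B → A ≠ C → B ≠ C →
      A ⊆ C → B ⊆ C → False := by
  intro A B C hA hB hC hAB hAC hBC h1 h2
  have hempty := Finset.card_eq_zero.mp hF
  have hmem : ({A, B, C} : Finset (Finset (Fin n))) ∈
      F.powerset.filter fun G => IsCopy (WedgePoset 2) G := by
    refine Finset.mem_filter.mpr ⟨Finset.mem_powerset.mpr ?_, wedge_of hAB hAC hBC h1 h2⟩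
    intro D hD
    simp only [Finset.mem_insert, Finset.mem_singleton] at hD
    rcases hD with rfl | rfl | rfl <;> assumption
  rw [hempty] at hmem
  exact absurd hmem (Finset.notMem_empty _)

end Aux3
section Aux4
variable {n : ℕ}

lemma pair_inf {X Y : Finset (Fin n)} (h : X ⊆ Y) :
    ({X, Y} : Finset (Finset (Fin n))).inf id = X := by
  rw [Finset.inf_insert, Finset.inf_singleton, id, id]
  exact inf_eq_left.mpr h

lemma pair_sup {X Y : Finset (Fin n)} (h : X ⊆ Y) :
    ({X, Y} : Finset (Finset (Fin n))).sup id = Y := by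
  rw [Finset.sup_insert, Finset.sup_singleton, id, id]
  exact sup_eq_right.mpr h

lemma vee_upper {F : Finset (Finset (Fin n))} (hF : copyCount (VeePoset 2) F = 0) :
    copyCount (PChain 2) F ≤ n.choose (n / 2) := by
  classical
  set S := F.powerset.filter fun G => IsCopy (PChain 2) G with hS
  have key : ∀ G ∈ S, ∃ X Y : Finset (Fin n),
      X ≠ Y ∧ X ⊆ Y ∧ G = {X, Y} ∧ X ∈ F ∧ Y ∈ F ∧ G.inf id = X := by
    intro G hG
    obtain ⟨hGF, hcopy⟩ := Finset.mem_filter.mp hG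
    obtain ⟨X, Y, hne, hsub, rfl⟩ := isCopy_chain2_iff.mp hcopy
    have hGF' := Finset.mem_powerset.mp hGF
    exact ⟨X, Y, hne, hsub, rfl, hGF' (Finset.mem_insert_self _ _),
      hGF' (Finset.mem_insert_of_mem (Finset.mem_singleton_self _)), pair_inf hsub⟩
  have hinj : Set.InjOn (fun G : Finset (Finset (Fin n)) => G.inf id)
      (↑S : Set (Finset (Finset (Fin n)))) := by
    intro G1 h1 G2 h2 heq
    obtain ⟨X1, Y1, hne1, hs1, hG1, hX1, hY1, hi1⟩ := key G1 h1
    obtain ⟨X2, Y2, hne2, hs2, hG2, hX2, hY2, hi2⟩ := key G2 h2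
    have heq' : X1 = X2 := by rw [← hi1, ← hi2]; exact heq
    subst heq'
    by_cases hY : Y1 = Y2
    · rw [hG1, hG2, hY]
    · exact absurd (vee_free_forall hF X1 Y1 Y2 hX1 hY1 hY2 hne1 hne2 hY hs1 hs2) not_false
  have hanti : IsAntichain (· ⊆ ·)
      ((S.image fun G => G.inf id) : Set (Finset (Fin n))) := by
    rintro a ha b hb hab hsub
    obtain ⟨G1, h1, ha'⟩ := Finset.mem_image.mp (by exact_mod_cast ha)
    obtain ⟨G2, h2, hb'⟩ := Finset.mem_image.mp (by exact_mod_cast hb)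
    obtain ⟨X1, Y1, hne1, hs1, hG1, hX1, hY1, hi1⟩ := key G1 h1
    obtain ⟨X2, Y2, hne2, hs2, hG2, hX2, hY2, hi2⟩ := key G2 h2
    have haX : a = X1 := by rw [← ha']; exact hi1
    have hbX : b = X2 := by rw [← hb']; exact hi2
    rw [haX, hbX] at hab hsub
    by_cases hY : Y1 = X2
    · have hX1Y2 : X1 ≠ Y2 := by
        rintro rfl
        exact hne2 (Finset.Subset.antisymm hs2 hsub)
      exact vee_free_forall hF X1 X2 Y2 hX1 hX2 hY2 hab hX1Y2 hne2 hsub (hsub.trans hs2)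
    · exact vee_free_forall hF X1 Y1 X2 hX1 hY1 hX2 hne1 hab hY hs1 hsub
  have hcard : S.card = (S.image fun G => G.inf id).card :=
    (Finset.card_image_of_injOn hinj).symm
  have hsp := IsAntichain.sperner hanti
  rw [Fintype.card_fin] at hsp
  calc copyCount (PChain 2) F = S.card := rfl
    _ = _ := hcard
    _ ≤ n.choose (n / 2) := hsp

lemma wedge_upper {F : Finset (Finset (Fin n))} (hF : copyCount (WedgePoset 2) F = 0) :
    copyCount (PChain 2) F ≤ n.choose (n / 2) := by
  classical
  set S := F.powerset.filter fun G => IsCopy (PChain 2) G with hS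
  have key : ∀ G ∈ S, ∃ X Y : Finset (Fin n),
      X ≠ Y ∧ X ⊆ Y ∧ G = {X, Y} ∧ X ∈ F ∧ Y ∈ F ∧ G.sup id = Y := by
    intro G hG
    obtain ⟨hGF, hcopy⟩ := Finset.mem_filter.mp hG
    obtain ⟨X, Y, hne, hsub, rfl⟩ := isCopy_chain2_iff.mp hcopy
    have hGF' := Finset.mem_powerset.mp hGF
    exact ⟨X, Y, hne, hsub, rfl, hGF' (Finset.mem_insert_self _ _),
      hGF' (Finset.mem_insert_of_mem (Finset.mem_singleton_self _)), pair_sup hsub⟩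
  have hinj : Set.InjOn (fun G : Finset (Finset (Fin n)) => G.sup id)
      (↑S : Set (Finset (Finset (Fin n)))) := by
    intro G1 h1 G2 h2 heq
    obtain ⟨X1, Y1, hne1, hs1, hG1, hX1, hY1, hi1⟩ := key G1 h1
    obtain ⟨X2, Y2, hne2, hs2, hG2, hX2, hY2, hi2⟩ := key G2 h2
    have heq' : Y1 = Y2 := by rw [← hi1, ← hi2]; exact heq
    subst heq'
    by_cases hX : X1 = X2
    · rw [hG1, hG2, hX]
    · exact absurd (wedge_free_forall hF X1 X2 Y1 hX1 hX2 hY1 hX hne1 hne2 hs1 hs2) not_false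
  have hanti : IsAntichain (· ⊆ ·)
      ((S.image fun G => G.sup id) : Set (Finset (Fin n))) := by
    rintro a ha b hb hab hsub
    obtain ⟨G1, h1, ha'⟩ := Finset.mem_image.mp (by exact_mod_cast ha)
    obtain ⟨G2, h2, hb'⟩ := Finset.mem_image.mp (by exact_mod_cast hb)
    obtain ⟨X1, Y1, hne1, hs1, hG1, hX1, hY1, hi1⟩ := key G1 h1
    obtain ⟨X2, Y2, hne2, hs2, hG2, hX2, hY2, hi2⟩ := key G2 h2
    have haX : a = Y1 := by rw [← ha']; exact hi1
    have hbX : b = Y2 := by rw [← hb']; exact hi2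
    rw [haX, hbX] at hab hsub
    by_cases hX : X2 = Y1
    · have h12 : X1 ≠ X2 := by rintro rfl; exact hne1 hX
      have hX1Y2 : X1 ≠ Y2 := by
        rintro rfl
        exact hne1 (Finset.Subset.antisymm hs1 hsub)
      exact wedge_free_forall hF X1 X2 Y2 hX1 hX2 hY2 h12 hX1Y2 hne2 (hs1.trans hsub) hs2
    · exact wedge_free_forall hF X2 Y1 Y2 hX2 hY1 hY2 hX hne2 hab hs2 hsub
  have hcard : S.card = (S.image fun G => G.sup id).card :=
    (Finset.card_image_of_injOn hinj).symm
  have hsp := IsAntichain.sperner hanti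
  rw [Fintype.card_fin] at hsp
  calc copyCount (PChain 2) F = S.card := rfl
    _ = _ := hcard
    _ ≤ n.choose (n / 2) := hsp

end Aux4
section Aux5
variable {n : ℕ}

lemma card_level (k : ℕ) : (level n k).card = n.choose k := by
  have : level n k = Finset.powersetCard k (Finset.univ : Finset (Fin n)) := by
    rw [Finset.powersetCard_eq_filter, Finset.powerset_univ, level]
  rw [this, Finset.card_powersetCard, Finset.card_univ, Fintype.card_fin]

lemma mem_level {k : ℕ} {A : Finset (Fin n)} : A ∈ level n k ↔ A.card = k := by
  simp [level]

/-- The Vee-extremal family: the middle level plus the full set. -/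
def veeFam (n : ℕ) : Finset (Finset (Fin n)) := level n (n / 2) ∪ {Finset.univ}

lemma univ_not_level (hn : 1 ≤ n) : (Finset.univ : Finset (Fin n)) ∉ level n (n / 2) := by
  rw [mem_level, Finset.card_univ, Fintype.card_fin]
  omega

lemma veeFam_sub (hn : 1 ≤ n) {X Y : Finset (Fin n)} (hX : X ∈ veeFam n) (hY : Y ∈ veeFam n)
    (hsub : X ⊆ Y) (hne : X ≠ Y) : X ∈ level n (n / 2) ∧ Y = Finset.univ := by
  rcases Finset.mem_union.mp hX with hX' | hX'
  · rcases Finset.mem_union.mp hY with hY' | hY'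
    · exact absurd (Finset.eq_of_subset_of_card_le hsub
        (le_of_eq (by rw [mem_level.mp hY', mem_level.mp hX']))) hne
    · exact ⟨hX', Finset.mem_singleton.mp hY'⟩
  · have hXu : X = Finset.univ := Finset.mem_singleton.mp hX'
    subst hXu
    exact absurd (Finset.univ_subset_iff.mp hsub).symm hne
  
lemma veeFam_free (hn : 1 ≤ n) : copyCount (VeePoset 2) (veeFam n) = 0 := by
  rw [copyCount, Finset.card_eq_zero, Finset.filter_eq_empty_iff]
  intro G hG hcopy
  have hGF := Finset.mem_powerset.mp hG
  obtain ⟨A, B, C, hA, hB, hC, hAB, hAC, hBC, h1, h2⟩ := vee_extract hcopy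
  have hB' := (veeFam_sub hn (hGF hA) (hGF hB) h1 hAB).2
  have hC' := (veeFam_sub hn (hGF hA) (hGF hC) h2 hAC).2
  exact hBC (hB'.trans hC'.symm)

lemma veeFam_count (hn : 1 ≤ n) : copyCount (PChain 2) (veeFam n) = n.choose (n / 2) := by
  classical
  have himg : (veeFam n).powerset.filter (fun G => IsCopy (PChain 2) G)
      = (level n (n / 2)).image fun A => ({A, Finset.univ} : Finset (Finset (Fin n))) := by
    ext G
    constructor
    · intro hG
      obtain ⟨hGF, hcopy⟩ := Finset.mem_filter.mp hG
      obtain ⟨X, Y, hne, hsub, rfl⟩ := isCopy_chain2_iff.mp hcopy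
      have hGF' := Finset.mem_powerset.mp hGF
      obtain ⟨hXl, hYu⟩ := veeFam_sub hn (hGF' (Finset.mem_insert_self _ _))
        (hGF' (Finset.mem_insert_of_mem (Finset.mem_singleton_self _))) hsub hne
      subst hYu
      exact Finset.mem_image.mpr ⟨X, hXl, rfl⟩
    · intro hG
      obtain ⟨A, hAl, rfl⟩ := Finset.mem_image.mp hG
      have hAu : A ≠ Finset.univ := by
        intro h
        exact univ_not_level hn (h ▸ hAl)
      refine Finset.mem_filter.mpr ⟨Finset.mem_powerset.mpr ?_, ?_⟩
      · intro D hD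
        rcases Finset.mem_insert.mp hD with rfl | hD
        · exact Finset.mem_union_left _ hAl
        · rw [Finset.mem_singleton.mp hD]
          exact Finset.mem_union_right _ (Finset.mem_singleton_self _)
      · exact isCopy_chain2_iff.mpr ⟨A, Finset.univ, hAu, Finset.subset_univ _, rfl⟩
  rw [copyCount, himg, Finset.card_image_of_injOn, card_level]
  intro A hA B hB h
  simp only at h
  have : A ∈ ({B, Finset.univ} : Finset (Finset (Fin n))) := h ▸ Finset.mem_insert_self _ _
  rcases Finset.mem_insert.mp this with h' | h'
  · exact h'
  · exact absurd ((Finset.mem_singleton.mp h') ▸ hA) (univ_not_level hn)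

/-- The Wedge-extremal family: the level n - n/2 plus the empty set. -/
def wedgeFam (n : ℕ) : Finset (Finset (Fin n)) := level n (n - n / 2) ∪ {(∅ : Finset (Fin n))}

lemma empty_not_level (hn : 1 ≤ n) : (∅ : Finset (Fin n)) ∉ level n (n - n / 2) := by
  rw [mem_level, Finset.card_empty]
  omega

lemma wedgeFam_sub (hn : 1 ≤ n) {X Y : Finset (Fin n)} (hX : X ∈ wedgeFam n)
    (hY : Y ∈ wedgeFam n) (hsub : X ⊆ Y) (hne : X ≠ Y) :
    X = ∅ ∧ Y ∈ level n (n - n / 2) := by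
  rcases Finset.mem_union.mp hY with hY' | hY'
  · rcases Finset.mem_union.mp hX with hX' | hX'
    · exact absurd (Finset.eq_of_subset_of_card_le hsub
        (le_of_eq (by rw [mem_level.mp hY', mem_level.mp hX']))) hne
    · exact ⟨Finset.mem_singleton.mp hX', hY'⟩
  · have hYe : Y = ∅ := Finset.mem_singleton.mp hY'
    subst hYe
    exact absurd (Finset.subset_empty.mp hsub) hne

lemma wedgeFam_free (hn : 1 ≤ n) : copyCount (WedgePoset 2) (wedgeFam n) = 0 := by
  rw [copyCount, Finset.card_eq_zero, Finset.filter_eq_empty_iff]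
  intro G hG hcopy
  have hGF := Finset.mem_powerset.mp hG
  obtain ⟨A, B, C, hA, hB, hC, hAB, hAC, hBC, h1, h2⟩ := wedge_extract hcopy
  have hA' := (wedgeFam_sub hn (hGF hA) (hGF hC) h1 hAC).1
  have hB' := (wedgeFam_sub hn (hGF hB) (hGF hC) h2 hBC).1
  exact hAB (hA'.trans hB'.symm)

lemma wedgeFam_count (hn : 1 ≤ n) :
    copyCount (PChain 2) (wedgeFam n) = n.choose (n / 2) := by
  classical
  have himg : (wedgeFam n).powerset.filter (fun G => IsCopy (PChain 2) G)
      = (level n (n - n / 2)).image fun A => ({(∅ : Finset (Fin n)), A} : Finset (Finset (Fin n))) := by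
    ext G
    constructor
    · intro hG
      obtain ⟨hGF, hcopy⟩ := Finset.mem_filter.mp hG
      obtain ⟨X, Y, hne, hsub, rfl⟩ := isCopy_chain2_iff.mp hcopy
      have hGF' := Finset.mem_powerset.mp hGF
      obtain ⟨hXe, hYl⟩ := wedgeFam_sub hn (hGF' (Finset.mem_insert_self _ _))
        (hGF' (Finset.mem_insert_of_mem (Finset.mem_singleton_self _))) hsub hne
      subst hXe
      refine Finset.mem_image.mpr ⟨Y, hYl, ?_⟩
      rfl
    · intro hG
      obtain ⟨A, hAl, rfl⟩ := Finset.mem_image.mp hG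
      have hAu : A ≠ ∅ := by
        intro h
        exact empty_not_level hn (h ▸ hAl)
      refine Finset.mem_filter.mpr ⟨Finset.mem_powerset.mpr ?_, ?_⟩
      · intro D hD
        rcases Finset.mem_insert.mp hD with rfl | hD
        · exact Finset.mem_union_right _ (Finset.mem_singleton_self _)
        · rw [Finset.mem_singleton.mp hD]
          exact Finset.mem_union_left _ hAl
      · exact isCopy_chain2_iff.mpr ⟨∅, A, fun h => hAu h.symm, Finset.empty_subset _, rfl⟩
  rw [copyCount, himg, Finset.card_image_of_injOn, card_level,
    Nat.choose_symm (Nat.div_le_self n 2)]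
  intro A hA B hB h
  simp only at h
  have : A ∈ ({(∅ : Finset (Fin n)), B} : Finset (Finset (Fin n))) := by
    rw [← h]; exact Finset.mem_insert_of_mem (Finset.mem_singleton_self _)
  rcases Finset.mem_insert.mp this with h' | h'
  · exact absurd (h' ▸ hA) (empty_not_level hn)
  · exact Finset.mem_singleton.mp h'

end Aux5

theorem statement0 (n : ℕ) (hn : 1 ≤ n) :
    La n (VeePoset 2) (PChain 2) = n.choose (n / 2) ∧
    La n (WedgePoset 2) (PChain 2) = n.choose (n / 2) := by
  constructor
  · apply le_antisymm
    · apply Finset.sup_le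
      intro F hF
      exact vee_upper (Finset.mem_filter.mp hF).2
    · have hmem : veeFam n ∈ (Finset.univ : Finset (Finset (Finset (Fin n)))).filter
          fun F => copyCount (VeePoset 2) F = 0 :=
        Finset.mem_filter.mpr ⟨Finset.mem_univ _, veeFam_free hn⟩
      have := Finset.le_sup (f := copyCount (PChain 2)) hmem
      rwa [veeFam_count hn] at this
  · apply le_antisymm
    · apply Finset.sup_le
      intro F hF
      exact wedge_upper (Finset.mem_filter.mp hF).2
    · have hmem : wedgeFam n ∈ (Finset.univ : Finset (Finset (Finset (Fin n)))).filter
          fun F => copyCount (WedgePoset 2) F = 0 :=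
        Finset.mem_filter.mpr ⟨Finset.mem_univ _, wedgeFam_free hn⟩
      have := Finset.le_sup (f := copyCount (PChain 2)) hmem
      rwa [wedgeFam_count hn] at this


end
end

section
/- Let n ≥ 1, let ℱ ⊆ 2^[n] be an antichain, and let 0 ≤ i < j ≤ n. If j − i is even, then γ²_{i,j}(ℱ) ≤ (1/2)·C(n,j)·C(j,i)·C(j−i, (j−i)/2), and this upper bound equals γ²_{i,j}(binom([n], (i+j)/2)), so it is attained by the full level of size (i+j)/2. If j − i is odd, then γ²_{i,j}(ℱ) ≤ C(n,j)·C(j,i)·C(j−i−1, ⌊(j−i)/2⌋ − 1). -/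
open Classical Finset

noncomputable section

namespace NPoset

instance : Fintype NPoset := ⟨{a, b, c, d}, fun x => by cases x <;> simp⟩

end NPoset

namespace BPlusPoset

instance : Fintype BPlusPoset := ⟨{a, b, c, d, e}, fun x => by cases x <;> simp⟩

end BPlusPoset

namespace BPlusPlusPoset

instance : Fintype BPlusPlusPoset := ⟨{a, b, c, d, e}, fun x => by cases x <;> simp⟩

end BPlusPlusPoset

open FinsetFamily


-- H1: pushing up increases size when below middle
lemma card_le_card_upShadow {N : ℕ} {𝒜 : Finset (Finset (Fin N))} {k : ℕ}
    (hs : (𝒜 : Set (Finset (Fin N))).Sized k) (hk : 2 * k + 1 ≤ N) :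
    𝒜.card ≤ (∂⁺ 𝒜).card := by
  have hN : Fintype.card (Fin N) = N := Fintype.card_fin N
  have hsz : ((𝒜ᶜˢ : Finset (Finset (Fin N))) : Set (Finset (Fin N))).Sized (N - k) := by
    simpa [hN] using hs.compls
  have hlym := Finset.card_mul_le_card_shadow_mul hsz
  rw [Finset.shadow_compls, Finset.card_compls, Finset.card_compls, hN] at hlym
  have h1 : N - (N - k) + 1 = k + 1 := by omega
  rw [h1] at hlym
  have h2 : k + 1 ≤ N - k := by omega
  have := hlym.trans (Nat.mul_le_mul_left _ h2)
  exact Nat.le_of_mul_le_mul_right this (by omega)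

-- H2: intersecting antichain with sizes ≤ m in ground set of size 2m+1
lemma pushup {m : ℕ} : ∀ t : ℕ, ∀ 𝒟 : Finset (Finset (Fin (2 * m + 1))),
    (∀ A ∈ 𝒟, ∀ B ∈ 𝒟, ¬ Disjoint A B) →
    IsAntichain (· ⊆ ·) (𝒟 : Set (Finset (Fin (2 * m + 1)))) →
    (∀ A ∈ 𝒟, m - t ≤ A.card ∧ A.card ≤ m) →
    𝒟.card ≤ (2 * m).choose (m - 1) := by
  intro t
  induction t with
  | zero =>
    intro 𝒟 hint hanti hsz
    have hsized : (𝒟 : Set (Finset (Fin (2 * m + 1)))).Sized m := by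
      intro A hA
      have := hsz A hA
      omega
    have hI : (𝒟 : Set (Finset (Fin (2 * m + 1)))).Intersecting := by
      intro A hA B hB
      exact hint A hA B hB
    have := Finset.erdos_ko_rado hI hsized (by omega)
    simpa using this
  | succ t ih =>
    intro 𝒟 hint hanti hsz
    set k := m - (t + 1) with hk
    set 𝒟k := 𝒟.filter (fun A => A.card = k) with h𝒟k
    by_cases hne : 𝒟k = ∅
    · refine ih 𝒟 hint hanti fun A hA => ?_
      have h1 := hsz A hA
      have h2 : A.card ≠ k := fun h => by
        have : A ∈ 𝒟k := by simp [h𝒟k, hA, h]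
        simp [hne] at this
      omega
    · -- nonempty size-k layer
      obtain ⟨A₀, hA₀⟩ := Finset.nonempty_of_ne_empty hne
      have hA₀D : A₀ ∈ 𝒟 ∧ A₀.card = k := by simpa [h𝒟k] using hA₀
      have hk1 : 1 ≤ k := by
        rcases Nat.eq_zero_or_pos k with h0 | h; swap; · exact h
        exfalso
        have : A₀ = ∅ := Finset.card_eq_zero.1 (by rw [hA₀D.2, h0])
        exact hint A₀ hA₀D.1 A₀ hA₀D.1 (by simp [this])
      have hkm : k + 1 ≤ m := by omega
      have hsizedk : (𝒟k : Set (Finset (Fin (2 * m + 1)))).Sized k := by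
        intro A hA; simp only [h𝒟k, coe_filter, Set.mem_setOf_eq] at hA; exact hA.2
      have hup : ((∂⁺ 𝒟k : Finset (Finset (Fin (2 * m + 1)))) : Set (Finset (Fin (2 * m + 1)))).Sized (k + 1) := by
        simpa using hsizedk.upShadow
      set ℰ := (𝒟 \ 𝒟k) ∪ ∂⁺ 𝒟k with hℰ
      -- every member of ℰ contains a member of 𝒟
      have hcont : ∀ E ∈ ℰ, ∃ D ∈ 𝒟, D ⊆ E := by
        intro E hE
        rcases Finset.mem_union.1 hE with h | h
        · exact ⟨E, (Finset.mem_sdiff.1 h).1, subset_rfl⟩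
        · obtain ⟨D, hD, hDE⟩ := Finset.exists_subset_of_mem_upShadow h
          exact ⟨D, (Finset.mem_filter.1 hD).1, hDE⟩
      -- sizes of members of 𝒟 \ 𝒟k are ≥ k+1
      have hsz' : ∀ E ∈ 𝒟 \ 𝒟k, k + 1 ≤ E.card ∧ E.card ≤ m := by
        intro E hE
        obtain ⟨hE𝒟, hEk⟩ := Finset.mem_sdiff.1 hE
        have h1 := hsz E hE𝒟
        have h2 : E.card ≠ k := fun h => hEk (by simp [h𝒟k, hE𝒟, h])
        omega
      have hεsz : ∀ E ∈ ℰ, m - t ≤ E.card ∧ E.card ≤ m := by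
        intro E hE
        rcases Finset.mem_union.1 hE with h | h
        · have := hsz' E h; omega
        · have := hup h; omega
      have hεint : ∀ A ∈ ℰ, ∀ B ∈ ℰ, ¬ Disjoint A B := by
        intro A hA B hB hd
        obtain ⟨D, hD, hDA⟩ := hcont A hA
        obtain ⟨D', hD', hD'B⟩ := hcont B hB
        exact hint D hD D' hD' (hd.mono hDA hD'B)
      have hεanti : IsAntichain (· ⊆ ·) (ℰ : Set (Finset (Fin (2 * m + 1)))) := by
        intro A hA B hB hAB hsub
        rw [Finset.mem_coe, hℰ, Finset.mem_union] at hA hB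
        rcases hA with hA | hA <;> rcases hB with hB | hB
        · exact hanti (Finset.mem_coe.2 (Finset.mem_sdiff.1 hA).1)
            (Finset.mem_coe.2 (Finset.mem_sdiff.1 hB).1) hAB hsub
        · -- A ∈ 𝒟 \ 𝒟k, B ∈ ∂⁺𝒟k : card A ≥ k+1 = card B
          have h1 := (hsz' A hA).1
          have h2 := hup hB
          exact hAB (Finset.eq_of_subset_of_card_le hsub (by omega))
        · -- A ∈ ∂⁺𝒟k, B ∈ 𝒟 \ 𝒟k
          obtain ⟨D, hD, hDA⟩ := Finset.exists_subset_of_mem_upShadow hA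
          obtain ⟨hD𝒟, hDk⟩ := Finset.mem_filter.1 hD
          have hB𝒟 := (Finset.mem_sdiff.1 hB).1
          have hne' : D ≠ B := by
            intro h; subst h
            have := (hsz' D hB).1; omega
          exact hanti (Finset.mem_coe.2 hD𝒟) (Finset.mem_coe.2 hB𝒟) hne' (hDA.trans hsub)
        · have h1 := hup hA
          have h2 := hup hB
          exact hAB (Finset.eq_of_subset_of_card_le hsub (by omega))
      have hdisj : Disjoint (𝒟 \ 𝒟k) (∂⁺ 𝒟k) := by
        rw [Finset.disjoint_left]
        intro E hE hE'
        obtain ⟨D, hD, hDE⟩ := Finset.exists_subset_of_mem_upShadow hE'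
        obtain ⟨hD𝒟, hDk⟩ := Finset.mem_filter.1 hD
        have h1 := (hsz' E hE).1
        have hne' : D ≠ E := by intro h; subst h; omega
        exact hanti (Finset.mem_coe.2 hD𝒟) (Finset.mem_coe.2 (Finset.mem_sdiff.1 hE).1) hne' hDE
      have hcard : 𝒟.card ≤ ℰ.card := by
        rw [hℰ, Finset.card_union_of_disjoint hdisj]
        have h1 : 𝒟.card = (𝒟 \ 𝒟k).card + 𝒟k.card := by
          rw [Finset.card_sdiff_add_card_eq_card (Finset.filter_subset _ _)]
        have h2 : 𝒟k.card ≤ (∂⁺ 𝒟k).card :=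
          card_le_card_upShadow hsizedk (by omega)
        omega
      exact hcard.trans (ih ℰ hεint hεanti hεsz)

lemma pushup' {N m : ℕ} (hN : N = 2 * m + 1) (𝒢 : Finset (Finset (Fin N)))
    (h1 : ∀ X ∈ 𝒢, ∀ Y ∈ 𝒢, ¬ Disjoint X Y)
    (h2 : IsAntichain (· ⊆ ·) (𝒢 : Set (Finset (Fin N))))
    (h3 : ∀ X ∈ 𝒢, m - m ≤ X.card ∧ X.card ≤ m) :
    𝒢.card ≤ (2 * m).choose (m - 1) := by
  subst hN
  exact pushup m 𝒢 h1 h2 h3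

section Transfer
variable {n : ℕ}

noncomputable def toGround (s : Finset (Fin n)) (A : Finset (Fin n)) : Finset (Fin s.card) :=
  Finset.univ.filter (fun k => (↑(s.equivFin.symm k) : Fin n) ∈ A)

lemma toGround_subset_iff {s A B : Finset (Fin n)} (hA : A ⊆ s) :
    toGround s A ⊆ toGround s B ↔ A ⊆ B := by
  constructor
  · intro h x hx
    have hxs : x ∈ s := hA hx
    have hk : s.equivFin ⟨x, hxs⟩ ∈ toGround s A := by
      simp [toGround, hx]
    have := h hk
    simpa [toGround] using this
  · intro h k hk
    simp only [toGround, Finset.mem_filter, Finset.mem_univ, true_and] at hk ⊢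
    exact h hk

lemma toGround_card {s A : Finset (Fin n)} (hA : A ⊆ s) :
    (toGround s A).card = A.card := by
  apply Finset.card_bij (fun k _ => (↑(s.equivFin.symm k) : Fin n))
  · intro k hk
    simpa [toGround] using hk
  · intro k hk k' hk' h
    have : s.equivFin.symm k = s.equivFin.symm k' := Subtype.coe_injective h
    exact s.equivFin.symm.injective this
  · intro x hx
    refine ⟨s.equivFin ⟨x, hA hx⟩, ?_, by simp⟩
    simp [toGround, hx]

lemma toGround_disjoint {s A B : Finset (Fin n)} (hA : A ⊆ s) :
    Disjoint (toGround s A) (toGround s B) ↔ Disjoint A B := by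
  rw [Finset.disjoint_left, Finset.disjoint_left]
  constructor
  · intro h x hx hxB
    have hxs : x ∈ s := hA hx
    exact h (a := s.equivFin ⟨x, hxs⟩) (by simp [toGround, hx]) (by simp [toGround, hxB])
  · intro h k hk hkB
    simp only [toGround, Finset.mem_filter, Finset.mem_univ, true_and] at hk hkB
    exact h hk hkB

/-- Sperner's theorem inside a finset ground set. -/
lemma sperner_sub {s : Finset (Fin n)} {𝒜 : Finset (Finset (Fin n))}
    (hsub : ∀ A ∈ 𝒜, A ⊆ s)
    (ha : IsAntichain (· ⊆ ·) (𝒜 : Set (Finset (Fin n)))) :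
    𝒜.card ≤ s.card.choose (s.card / 2) := by
  classical
  have hinj : Set.InjOn (toGround s) 𝒜 := by
    intro A hA B hB h
    have h1 : A ⊆ B := (toGround_subset_iff (hsub A hA)).1 (by rw [h])
    have h2 : B ⊆ A := (toGround_subset_iff (hsub B hB)).1 (by rw [h])
    exact Finset.Subset.antisymm h1 h2
  rw [← Finset.card_image_of_injOn hinj]
  have hanti : IsAntichain (· ⊆ ·) ((𝒜.image (toGround s) : Finset (Finset (Fin s.card))) :
      Set (Finset (Fin s.card))) := by
    intro X hX Y hY hXY hsub'
    simp only [Finset.coe_image, Set.mem_image, Finset.mem_coe] at hX hY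
    obtain ⟨A, hA, rfl⟩ := hX
    obtain ⟨B, hB, rfl⟩ := hY
    have hne : A ≠ B := fun h => hXY (by rw [h])
    exact ha (Finset.mem_coe.2 hA) (Finset.mem_coe.2 hB) hne
      ((toGround_subset_iff (hsub A hA)).1 hsub')
  have := IsAntichain.sperner hanti
  simpa using this

/-- the intersecting-antichain bound inside a finset ground set. -/
lemma intersecting_antichain_sub {s : Finset (Fin n)} {𝒟 : Finset (Finset (Fin n))} {m : ℕ}
    (hs : s.card = 2 * m + 1)
    (hsub : ∀ A ∈ 𝒟, A ⊆ s) (hsz : ∀ A ∈ 𝒟, A.card ≤ m)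
    (hint : ∀ A ∈ 𝒟, ∀ B ∈ 𝒟, ¬ Disjoint A B)
    (ha : IsAntichain (· ⊆ ·) (𝒟 : Set (Finset (Fin n)))) :
    𝒟.card ≤ (2 * m).choose (m - 1) := by
  classical
  have hinj : Set.InjOn (toGround s) 𝒟 := by
    intro A hA B hB h
    have h1 : A ⊆ B := (toGround_subset_iff (hsub A hA)).1 (by rw [h])
    have h2 : B ⊆ A := (toGround_subset_iff (hsub B hB)).1 (by rw [h])
    exact Finset.Subset.antisymm h1 h2
  rw [← Finset.card_image_of_injOn hinj]
  set 𝒢 := 𝒟.image (toGround s) with h𝒢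
  have hmem : ∀ X ∈ 𝒢, ∃ A ∈ 𝒟, toGround s A = X := by
    intro X hX; simpa [h𝒢] using hX
  have h1 : ∀ X ∈ 𝒢, ∀ Y ∈ 𝒢, ¬ Disjoint X Y := by
    intro X hX Y hY
    obtain ⟨A, hA, rfl⟩ := hmem X hX
    obtain ⟨B, hB, rfl⟩ := hmem Y hY
    rw [toGround_disjoint (hsub A hA)]
    exact hint A hA B hB
  have h2 : IsAntichain (· ⊆ ·) (𝒢 : Set (Finset (Fin s.card))) := by
    intro X hX Y hY hXY hsub'
    obtain ⟨A, hA, rfl⟩ := hmem X (Finset.mem_coe.1 hX)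
    obtain ⟨B, hB, rfl⟩ := hmem Y (Finset.mem_coe.1 hY)
    have hne : A ≠ B := fun h => hXY (by rw [h])
    exact ha (Finset.mem_coe.2 hA) (Finset.mem_coe.2 hB) hne
      ((toGround_subset_iff (hsub A hA)).1 hsub')
  have h3 : ∀ X ∈ 𝒢, m - m ≤ X.card ∧ X.card ≤ m := by
    intro X hX
    obtain ⟨A, hA, rfl⟩ := hmem X hX
    rw [toGround_card (hsub A hA)]
    exact ⟨by omega, hsz A hA⟩
  exact pushup' hs 𝒢 h1 h2 (fun X hX => ⟨(h3 X hX).1, (h3 X hX).2⟩)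

end Transfer

section Counting

variable {n : ℕ} (i j : ℕ)

def Spairs (F : Finset (Finset (Fin n))) : Finset (Finset (Fin n) × Finset (Fin n)) :=
  (F ×ˢ F).filter fun p => p.1 ≠ p.2 ∧ (p.1 ∩ p.2).card = i ∧ (p.1 ∪ p.2).card = j

lemma mem_spairs {F : Finset (Finset (Fin n))} {p : Finset (Fin n) × Finset (Fin n)} :
    p ∈ Spairs i j F ↔ p.1 ∈ F ∧ p.2 ∈ F ∧ p.1 ≠ p.2 ∧
      (p.1 ∩ p.2).card = i ∧ (p.1 ∪ p.2).card = j := by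
  simp [Spairs, Finset.mem_product, and_assoc]

lemma spairs_card (F : Finset (Finset (Fin n))) :
    (Spairs i j F).card = 2 * gammaCount 2 n i j F := by
  classical
  rw [gammaCount]
  set 𝒢 := F.powerset.filter (fun G =>
    G.card = 2 ∧ (G.inf id).card = i ∧ (G.sup id).card = j) with h𝒢
  have hmap : ∀ p ∈ Spairs i j F, ({p.1, p.2} : Finset (Finset (Fin n))) ∈ 𝒢 := by
    intro p hp
    obtain ⟨h1, h2, hne, hi, hj⟩ := (mem_spairs i j).1 hp
    refine Finset.mem_filter.2 ⟨Finset.mem_powerset.2 ?_, ?_, ?_, ?_⟩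
    · intro x hx
      rcases Finset.mem_insert.1 hx with rfl | hx
      · exact h1
      · rwa [Finset.mem_singleton.1 hx]
    · exact Finset.card_pair hne
    · rwa [Finset.inf_insert, Finset.inf_singleton, id, id, Finset.inf_eq_inter]
    · rwa [Finset.sup_insert, Finset.sup_singleton, id, id, Finset.sup_eq_union]
  rw [Finset.card_eq_sum_card_fiberwise hmap]
  rw [Finset.sum_congr rfl (g := fun _ => 2) ?_, Finset.sum_const, smul_eq_mul, mul_comm]
  intro G hG
  obtain ⟨hGF, hG2, hGi, hGj⟩ := Finset.mem_filter.1 hG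
  rw [Finset.mem_powerset] at hGF
  obtain ⟨a, b, hab, rfl⟩ := Finset.card_eq_two.1 hG2
  have ha : a ∈ F := hGF (by simp)
  have hb : b ∈ F := hGF (by simp)
  have hiab : (a ∩ b).card = i := by
    rwa [Finset.inf_insert, Finset.inf_singleton, id, id, Finset.inf_eq_inter] at hGi
  have hjab : (a ∪ b).card = j := by
    rwa [Finset.sup_insert, Finset.sup_singleton, id, id, Finset.sup_eq_union] at hGj
  have hfib : (Spairs i j F).filter
      (fun p => ({p.1, p.2} : Finset (Finset (Fin n))) = {a, b}) = {(a, b), (b, a)} := by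
    ext p
    rw [Finset.mem_filter, mem_spairs]
    constructor
    · rintro ⟨⟨h1, h2, hne, _, _⟩, hpair⟩
      have hp1 : p.1 ∈ ({a, b} : Finset (Finset (Fin n))) := by rw [← hpair]; simp
      have hp2 : p.2 ∈ ({a, b} : Finset (Finset (Fin n))) := by rw [← hpair]; simp
      simp only [Finset.mem_insert, Finset.mem_singleton] at hp1 hp2 ⊢
      rcases hp1 with hp1 | hp1 <;> rcases hp2 with hp2 | hp2
      · exact absurd (hp1.trans hp2.symm) hne
      · left; exact Prod.ext hp1 hp2
      · right; exact Prod.ext hp1 hp2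
      · exact absurd (hp1.trans hp2.symm) hne
    · intro hp
      simp only [Finset.mem_insert, Finset.mem_singleton] at hp
      rcases hp with rfl | rfl
      · exact ⟨⟨ha, hb, hab, hiab, hjab⟩, rfl⟩
      · refine ⟨⟨hb, ha, fun h => hab h.symm, ?_, ?_⟩, ?_⟩
        · rwa [Finset.inter_comm]
        · rwa [Finset.union_comm]
        · ext x; simp [or_comm]
  rw [hfib, Finset.card_insert_of_notMem, Finset.card_singleton]
  simp only [Finset.mem_singleton]
  intro h
  exact hab (congrArg Prod.fst h)

def Tpairs : Finset (Finset (Fin n) × Finset (Fin n)) :=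
  (Finset.univ ×ˢ Finset.univ).filter fun q => q.1 ⊆ q.2 ∧ q.1.card = i ∧ q.2.card = j

lemma mem_tpairs {q : Finset (Fin n) × Finset (Fin n)} :
    q ∈ Tpairs i j (n := n) ↔ q.1 ⊆ q.2 ∧ q.1.card = i ∧ q.2.card = j := by
  simp [Tpairs]

lemma tpairs_card : (Tpairs i j (n := n)).card = n.choose j * j.choose i := by
  classical
  have hmap : ∀ q ∈ Tpairs i j (n := n), q.2 ∈ Finset.univ.powersetCard j := by
    intro q hq
    exact Finset.mem_powersetCard.2 ⟨Finset.subset_univ _, ((mem_tpairs i j).1 hq).2.2⟩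
  rw [Finset.card_eq_sum_card_fiberwise hmap]
  rw [Finset.sum_congr rfl (g := fun _ => j.choose i) ?_, Finset.sum_const, smul_eq_mul,
    Finset.card_powersetCard, Finset.card_univ, Fintype.card_fin]
  intro U hU
  obtain ⟨-, hUj⟩ := Finset.mem_powersetCard.1 hU
  have : (Tpairs i j (n := n)).filter (fun q => q.2 = U) =
      (U.powersetCard i).image (fun I => (I, U)) := by
    ext q
    rw [Finset.mem_filter, mem_tpairs]
    simp only [Finset.mem_image, Finset.mem_powersetCard]
    constructor
    · rintro ⟨⟨hsub, hi, hj'⟩, rfl⟩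
      exact ⟨q.1, ⟨hsub, hi⟩, rfl⟩
    · rintro ⟨I, ⟨hsub, hi⟩, rfl⟩
      exact ⟨⟨hsub, hi, hUj⟩, rfl⟩
  rw [this, Finset.card_image_of_injective _ (fun x y h => congrArg Prod.fst h),
    Finset.card_powersetCard, hUj]

lemma spairs_fiber_decomp (F : Finset (Finset (Fin n))) :
    (Spairs i j F).card = ∑ q ∈ Tpairs i j (n := n),
      ((Spairs i j F).filter (fun p => (p.1 ∩ p.2, p.1 ∪ p.2) = q)).card := by
  classical
  refine Finset.card_eq_sum_card_fiberwise ?_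
  intro p hp
  obtain ⟨h1, h2, hne, hi, hj⟩ := (mem_spairs i j).1 hp
  exact (mem_tpairs i j).2 ⟨Finset.inter_subset_left.trans Finset.subset_union_left, hi, hj⟩

end Counting

section Fiber

variable {n i j : ℕ} {F : Finset (Finset (Fin n))} {q : Finset (Fin n) × Finset (Fin n)}

lemma fiber_facts (hq : q ∈ Tpairs i j (n := n)) :
    ∃ 𝒜 : Finset (Finset (Fin n)),
      ((Spairs i j F).filter (fun p => (p.1 ∩ p.2, p.1 ∪ p.2) = q)).card = 𝒜.card ∧
      (∀ A ∈ 𝒜, A ⊆ q.2 \ q.1) ∧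
      (∀ A ∈ 𝒜, (q.2 \ q.1) \ A ∈ 𝒜) ∧
      (IsAntichain (· ⊆ ·) (F : Set (Finset (Fin n))) →
        IsAntichain (· ⊆ ·) (𝒜 : Set (Finset (Fin n)))) := by
  classical
  obtain ⟨hIU, hIi, hUj⟩ := (mem_tpairs i j).1 hq
  set I := q.1
  set U := q.2
  set fib := (Spairs i j F).filter (fun p => (p.1 ∩ p.2, p.1 ∪ p.2) = q) with hfib
  have hmem : ∀ p ∈ fib, p.1 ∈ F ∧ p.2 ∈ F ∧ p.1 ≠ p.2 ∧ p.1 ∩ p.2 = I ∧ p.1 ∪ p.2 = U := by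
    intro p hp
    obtain ⟨hpS, hpq⟩ := Finset.mem_filter.1 hp
    obtain ⟨h1, h2, hne, -, -⟩ := (mem_spairs i j).1 hpS
    exact ⟨h1, h2, hne, congrArg Prod.fst hpq, congrArg Prod.snd hpq⟩
  -- reconstruction facts
  have hrec : ∀ p ∈ fib, p.1 = I ∪ (p.1 \ I) ∧ p.2 \ I = (U \ I) \ (p.1 \ I) ∧
      p.2 = I ∪ (p.2 \ I) := by
    intro p hp
    obtain ⟨-, -, -, hI, hU⟩ := hmem p hp
    have hI1 : I ⊆ p.1 := by rw [← hI]; exact Finset.inter_subset_left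
    have hI2 : I ⊆ p.2 := by rw [← hI]; exact Finset.inter_subset_right
    refine ⟨(Finset.union_sdiff_of_subset hI1).symm, ?_, (Finset.union_sdiff_of_subset hI2).symm⟩
    ext x
    have h1 : x ∈ p.1 ∧ x ∈ p.2 ↔ x ∈ I := by rw [← hI]; simp
    have h2 : x ∈ p.1 ∨ x ∈ p.2 ↔ x ∈ U := by rw [← hU]; simp
    simp only [Finset.mem_sdiff]
    tauto
  have hinj : Set.InjOn (fun p : Finset (Fin n) × Finset (Fin n) => p.1 \ I) fib := by
    intro p hp p' hp' h
    simp only at h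
    obtain ⟨e1, e2, e3⟩ := hrec p hp
    obtain ⟨f1, f2, f3⟩ := hrec p' hp'
    have hfst : p.1 = p'.1 := by rw [e1, f1, h]
    have hsnd : p.2 = p'.2 := by rw [e3, f3, e2, f2, h]
    exact Prod.ext hfst hsnd
  refine ⟨fib.image (fun p => p.1 \ I), (Finset.card_image_of_injOn hinj).symm, ?_, ?_, ?_⟩
  · rintro A hA
    obtain ⟨p, hp, rfl⟩ := Finset.mem_image.1 hA
    obtain ⟨-, -, -, hI, hU⟩ := hmem p hp
    have : p.1 ⊆ U := by rw [← hU]; exact Finset.subset_union_left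
    exact Finset.sdiff_subset_sdiff this subset_rfl
  · rintro A hA
    obtain ⟨p, hp, rfl⟩ := Finset.mem_image.1 hA
    have hswap : ((p.2, p.1) : Finset (Fin n) × Finset (Fin n)) ∈ fib := by
      obtain ⟨hpS, hpq⟩ := Finset.mem_filter.1 hp
      obtain ⟨h1, h2, hne, hi', hj'⟩ := (mem_spairs i j).1 hpS
      refine Finset.mem_filter.2 ⟨(mem_spairs i j).2 ⟨h2, h1, hne.symm, ?_, ?_⟩, ?_⟩
      · rwa [Finset.inter_comm]
      · rwa [Finset.union_comm]
      · rwa [Finset.inter_comm p.2 p.1, Finset.union_comm p.2 p.1]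
    refine Finset.mem_image.2 ⟨(p.2, p.1), hswap, ?_⟩
    obtain ⟨-, e2, -⟩ := hrec p hp
    exact e2
  · intro hF A hA B hB hAB hsub
    obtain ⟨p, hp, rfl⟩ := Finset.mem_image.1 (Finset.mem_coe.1 hA)
    obtain ⟨p', hp', rfl⟩ := Finset.mem_image.1 (Finset.mem_coe.1 hB)
    obtain ⟨e1, -, -⟩ := hrec p hp
    obtain ⟨f1, -, -⟩ := hrec p' hp'
    have hsub' : p.1 ⊆ p'.1 := by
      rw [e1, f1]
      exact Finset.union_subset_union subset_rfl hsub
    have hne : p.1 ≠ p'.1 := by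
      intro h
      apply hAB
      rw [h]
    exact hF (Finset.mem_coe.2 (hmem p hp).1) (Finset.mem_coe.2 (hmem p' hp').1) hne hsub'

lemma fiber_card_le_even (hq : q ∈ Tpairs i j (n := n)) (hij : i ≤ j)
    (hF : IsAntichain (· ⊆ ·) (F : Set (Finset (Fin n)))) :
    ((Spairs i j F).filter (fun p => (p.1 ∩ p.2, p.1 ∪ p.2) = q)).card ≤
      (j - i).choose ((j - i) / 2) := by
  classical
  obtain ⟨hIU, hIi, hUj⟩ := (mem_tpairs i j).1 hq
  obtain ⟨𝒜, hcard, hsub, hcompl, hanti⟩ := fiber_facts (F := F) hq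
  have hs : (q.2 \ q.1).card = j - i := by
    rw [Finset.card_sdiff_of_subset hIU, hIi, hUj]
  rw [hcard, ← hs]
  exact sperner_sub hsub (hanti hF)

lemma fiber_card_le_odd (hq : q ∈ Tpairs i j (n := n)) (hij : i ≤ j)
    (hodd : (j - i) % 2 = 1)
    (hF : IsAntichain (· ⊆ ·) (F : Set (Finset (Fin n)))) :
    ((Spairs i j F).filter (fun p => (p.1 ∩ p.2, p.1 ∪ p.2) = q)).card ≤
      2 * (j - i - 1).choose ((j - i) / 2 - 1) := by
  classical
  obtain ⟨hIU, hIi, hUj⟩ := (mem_tpairs i j).1 hq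
  obtain ⟨𝒜, hcard, hsub, hcompl, hantiF⟩ := fiber_facts (F := F) hq
  have hanti := hantiF hF
  set s := q.2 \ q.1 with hsdef
  set m := (j - i) / 2 with hm
  have hs : s.card = 2 * m + 1 := by
    rw [hsdef, Finset.card_sdiff_of_subset hIU, hIi, hUj]; omega
  have hcards : ∀ A ∈ 𝒜, A.card + (s \ A).card = 2 * m + 1 := by
    intro A hA
    rw [← hs, Finset.card_sdiff_of_subset (hsub A hA)]
    have := Finset.card_le_card (hsub A hA)
    omega
  set 𝒟 := 𝒜.filter (fun A => A.card ≤ m) with h𝒟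
  -- |𝒜| ≤ 2 * |𝒟|
  have hbig : (𝒜 \ 𝒟).card ≤ 𝒟.card := by
    apply Finset.card_le_card_of_injOn (fun A => s \ A)
    · intro A hA
      obtain ⟨hA𝒜, hAm⟩ := Finset.mem_sdiff.1 hA
      have hAm' : ¬ A.card ≤ m := by
        intro h; exact hAm (Finset.mem_filter.2 ⟨hA𝒜, h⟩)
      have := hcards A hA𝒜
      refine Finset.mem_filter.2 ⟨hcompl A hA𝒜, by show (s \ A).card ≤ m; omega⟩
    · intro A hA B hB h
      obtain ⟨hA𝒜, -⟩ := Finset.mem_sdiff.1 hA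
      obtain ⟨hB𝒜, -⟩ := Finset.mem_sdiff.1 hB
      have h' : s \ A = s \ B := h
      have hA' : s \ (s \ A) = A := by
        rw [Finset.sdiff_sdiff_self_left, Finset.inter_eq_right.2 (hsub A hA𝒜)]
      have hB' : s \ (s \ B) = B := by
        rw [Finset.sdiff_sdiff_self_left, Finset.inter_eq_right.2 (hsub B hB𝒜)]
      rw [← hA', ← hB', h']
  have h2 : 𝒜.card ≤ 2 * 𝒟.card := by
    have := Finset.card_sdiff_add_card_eq_card (Finset.filter_subset (fun A => A.card ≤ m) 𝒜)
    rw [← h𝒟] at this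
    omega
  -- 𝒟 is intersecting
  have hint : ∀ A ∈ 𝒟, ∀ B ∈ 𝒟, ¬ Disjoint A B := by
    intro A hA B hB hd
    obtain ⟨hA𝒜, hAm⟩ := Finset.mem_filter.1 hA
    obtain ⟨hB𝒜, hBm⟩ := Finset.mem_filter.1 hB
    have hsubAB : A ⊆ s \ B := Finset.subset_sdiff.2 ⟨hsub A hA𝒜, hd⟩
    have hSB : s \ B ∈ 𝒜 := hcompl B hB𝒜
    have hne : A ≠ s \ B := by
      intro h
      have h1 := hcards B hB𝒜
      rw [← h] at h1
      omega
    exact hanti (Finset.mem_coe.2 hA𝒜) (Finset.mem_coe.2 hSB) hne hsubAB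
  have hanti𝒟 : IsAntichain (· ⊆ ·) (𝒟 : Set (Finset (Fin n))) :=
    hanti.subset (Finset.coe_subset.2 (by rw [h𝒟]; exact Finset.filter_subset _ _))
  have h𝒟le : 𝒟.card ≤ (2 * m).choose (m - 1) := by
    refine intersecting_antichain_sub hs ?_ ?_ hint hanti𝒟
    · intro A hA; exact hsub A (Finset.mem_filter.1 hA).1
    · intro A hA; exact (Finset.mem_filter.1 hA).2
  have hfin : (j - i - 1) = 2 * m := by omega
  rw [hcard, hfin]
  omega

end Fiber

section LevelFiber

variable {n i j : ℕ} {q : Finset (Fin n) × Finset (Fin n)}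

set_option maxHeartbeats 2000000 in
lemma fiber_card_level (hq : q ∈ Tpairs i j (n := n)) {h : ℕ} (hd : j - i = 2 * h)
    (hh : 1 ≤ h) (hij : i ≤ j) :
    ((Spairs i j (level n (i + h))).filter (fun p => (p.1 ∩ p.2, p.1 ∪ p.2) = q)).card =
      (2 * h).choose h := by
  classical
  obtain ⟨hIU, hIi, hUj⟩ := (mem_tpairs i j).1 hq
  set I := q.1
  set U := q.2
  set s := U \ I with hsdef
  have hscard : s.card = 2 * h := by rw [hsdef, Finset.card_sdiff_of_subset hIU, hIi, hUj, hd]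
  set F := level n (i + h) with hFdef
  set fib := (Spairs i j F).filter (fun p => (p.1 ∩ p.2, p.1 ∪ p.2) = q) with hfib
  have hmem : ∀ p ∈ fib, p.1 ∈ F ∧ p.2 ∈ F ∧ p.1 ≠ p.2 ∧ p.1 ∩ p.2 = I ∧ p.1 ∪ p.2 = U := by
    intro p hp
    obtain ⟨hpS, hpq⟩ := Finset.mem_filter.1 hp
    obtain ⟨h1, h2, hne, -, -⟩ := (mem_spairs i j).1 hpS
    exact ⟨h1, h2, hne, congrArg Prod.fst hpq, congrArg Prod.snd hpq⟩
  have hrec : ∀ p ∈ fib, p.1 = I ∪ (p.1 \ I) ∧ p.2 \ I = s \ (p.1 \ I) ∧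
      p.2 = I ∪ (p.2 \ I) := by
    intro p hp
    obtain ⟨-, -, -, hI, hU⟩ := hmem p hp
    have hI1 : I ⊆ p.1 := by rw [← hI]; exact Finset.inter_subset_left
    have hI2 : I ⊆ p.2 := by rw [← hI]; exact Finset.inter_subset_right
    refine ⟨(Finset.union_sdiff_of_subset hI1).symm, ?_, (Finset.union_sdiff_of_subset hI2).symm⟩
    ext x
    have h1 : x ∈ p.1 ∧ x ∈ p.2 ↔ x ∈ I := by rw [← hI]; simp
    have h2 : x ∈ p.1 ∨ x ∈ p.2 ↔ x ∈ U := by rw [← hU]; simp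
    have h3 : x ∈ s ↔ x ∈ U ∧ x ∉ I := by rw [hsdef]; simp
    simp only [Finset.mem_sdiff]
    tauto
  have hinj : Set.InjOn (fun p : Finset (Fin n) × Finset (Fin n) => p.1 \ I) fib := by
    intro p hp p' hp' hAB
    have hAB' : p.1 \ I = p'.1 \ I := hAB
    obtain ⟨e1, e2, e3⟩ := hrec p hp
    obtain ⟨f1, f2, f3⟩ := hrec p' hp'
    have hfst : p.1 = p'.1 := by rw [e1, f1, hAB']
    have hsnd : p.2 = p'.2 := by rw [e3, f3, e2, f2, hAB']
    exact Prod.ext hfst hsnd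
  have himg : fib.image (fun p : Finset (Fin n) × Finset (Fin n) => p.1 \ I) =
      s.powersetCard h := by
    ext A
    simp only [Finset.mem_image, Finset.mem_powersetCard]
    constructor
    · rintro ⟨p, hp, rfl⟩
      obtain ⟨hp1F, -, -, hI, hU⟩ := hmem p hp
      have hI1 : I ⊆ p.1 := by rw [← hI]; exact Finset.inter_subset_left
      have hp1U : p.1 ⊆ U := by rw [← hU]; exact Finset.subset_union_left
      have hp1card : p.1.card = i + h := by
        have := Finset.mem_filter.1 (by rw [hFdef] at hp1F; exact hp1F)
        exact this.2
      constructor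
      · exact Finset.sdiff_subset_sdiff hp1U subset_rfl
      · rw [Finset.card_sdiff_of_subset hI1, hp1card, hIi]; omega
    · rintro ⟨hAs, hAh⟩
      have hdisj : Disjoint A I := Finset.disjoint_of_subset_left hAs Finset.sdiff_disjoint
      have hdisj' : Disjoint (s \ A) I :=
        Finset.disjoint_of_subset_left (Finset.sdiff_subset.trans subset_rfl)
          Finset.sdiff_disjoint
      have hsA : (s \ A).card = h := by
        rw [Finset.card_sdiff_of_subset hAs, hscard, hAh]; omega
      have hc1 : (I ∪ A).card = i + h := by
        rw [Finset.card_union_of_disjoint hdisj.symm, hIi, hAh]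
      have hc2 : (I ∪ (s \ A)).card = i + h := by
        rw [Finset.card_union_of_disjoint hdisj'.symm, hIi, hsA]
      have hint : (I ∪ A) ∩ (I ∪ (s \ A)) = I := by
        rw [← Finset.union_inter_distrib_left]
        rw [Finset.inter_sdiff_self A s, Finset.union_empty]
      have hun : (I ∪ A) ∪ (I ∪ (s \ A)) = U := by
        rw [← Finset.union_union_distrib_left, Finset.union_sdiff_of_subset hAs,
          hsdef, Finset.union_sdiff_of_subset hIU]
      have hne : I ∪ A ≠ I ∪ (s \ A) := by
        intro heq
        have e1 : (I ∪ A) \ I = A := by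
          rw [Finset.union_sdiff_cancel_left hdisj.symm]
        have e2 : (I ∪ (s \ A)) \ I = s \ A := by
          rw [Finset.union_sdiff_cancel_left hdisj'.symm]
        have hASA : A = s \ A := by conv_lhs => rw [← e1, heq, e2]
        have hdAA : Disjoint A A := by
          nth_rewrite 2 [hASA]
          exact Finset.sdiff_disjoint.symm
        have hA0 : A = ⊥ := disjoint_self.1 hdAA
        rw [hA0] at hAh
        simp [Finset.bot_eq_empty] at hAh
        omega
      refine ⟨(I ∪ A, I ∪ (s \ A)), ?_, ?_⟩
      · refine Finset.mem_filter.2 ⟨(mem_spairs i j).2 ⟨?_, ?_, hne, ?_, ?_⟩, ?_⟩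
        · rw [hFdef]; exact Finset.mem_filter.2 ⟨Finset.mem_univ _, hc1⟩
        · rw [hFdef]; exact Finset.mem_filter.2 ⟨Finset.mem_univ _, hc2⟩
        · rw [hint, hIi]
        · rw [hun, hUj]
        · rw [hint, hun]
      · rw [Finset.union_sdiff_cancel_left hdisj.symm]
  rw [← Finset.card_image_of_injOn hinj, himg, Finset.card_powersetCard, hscard]

end LevelFiber

theorem statement8 (n : ℕ) (hn : 1 ≤ n) (F : Finset (Finset (Fin n)))
    (hF : IsAntichain (· ⊆ ·) (↑F : Set (Finset (Fin n))))
    (i j : ℕ) (hij : i < j) (hj : j ≤ n) :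
    ((j - i) % 2 = 0 →
      2 * gammaCount 2 n i j F ≤ n.choose j * j.choose i * (j - i).choose ((j - i) / 2) ∧
      2 * gammaCount 2 n i j (level n ((i + j) / 2)) =
        n.choose j * j.choose i * (j - i).choose ((j - i) / 2)) ∧
    ((j - i) % 2 = 1 →
      gammaCount 2 n i j F ≤
        n.choose j * j.choose i * (j - i - 1).choose ((j - i) / 2 - 1)) := by
  constructor
  · intro hev
    obtain ⟨h, hd⟩ : ∃ h, j - i = 2 * h := ⟨(j - i) / 2, by omega⟩
    have hh : 1 ≤ h := by omega
    constructor
    · calc 2 * gammaCount 2 n i j F = (Spairs i j F).card := (spairs_card i j F).symm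
        _ = ∑ q ∈ Tpairs i j (n := n),
            ((Spairs i j F).filter (fun p => (p.1 ∩ p.2, p.1 ∪ p.2) = q)).card :=
              spairs_fiber_decomp i j F
        _ ≤ ∑ _q ∈ Tpairs i j (n := n), (j - i).choose ((j - i) / 2) :=
              Finset.sum_le_sum fun q hq => fiber_card_le_even hq hij.le hF
        _ = n.choose j * j.choose i * (j - i).choose ((j - i) / 2) := by
              rw [Finset.sum_const, smul_eq_mul, tpairs_card]
    · have hlev : (i + j) / 2 = i + h := by omega
      rw [hlev]
      calc 2 * gammaCount 2 n i j (level n (i + h))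
          = (Spairs i j (level n (i + h))).card := (spairs_card i j _).symm
        _ = ∑ q ∈ Tpairs i j (n := n),
            ((Spairs i j (level n (i + h))).filter
              (fun p => (p.1 ∩ p.2, p.1 ∪ p.2) = q)).card := spairs_fiber_decomp i j _
        _ = ∑ _q ∈ Tpairs i j (n := n), (2 * h).choose h :=
              Finset.sum_congr rfl fun q hq => fiber_card_level hq hd hh hij.le
        _ = n.choose j * j.choose i * (j - i).choose ((j - i) / 2) := by
              rw [Finset.sum_const, smul_eq_mul, tpairs_card, hd]
              congr 2
              omega
  · intro hodd
    have key : 2 * gammaCount 2 n i j F ≤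
        n.choose j * j.choose i * (2 * ((j - i - 1).choose ((j - i) / 2 - 1))) := by
      calc 2 * gammaCount 2 n i j F = (Spairs i j F).card := (spairs_card i j F).symm
        _ = ∑ q ∈ Tpairs i j (n := n),
            ((Spairs i j F).filter (fun p => (p.1 ∩ p.2, p.1 ∪ p.2) = q)).card :=
              spairs_fiber_decomp i j F
        _ ≤ ∑ _q ∈ Tpairs i j (n := n), 2 * (j - i - 1).choose ((j - i) / 2 - 1) :=
              Finset.sum_le_sum fun q hq => fiber_card_le_odd hq hij.le hodd hF
        _ = n.choose j * j.choose i * (2 * ((j - i - 1).choose ((j - i) / 2 - 1))) := by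
              rw [Finset.sum_const, smul_eq_mul, tpairs_card]
    rw [mul_left_comm] at key
    exact Nat.le_of_mul_le_mul_left key (by norm_num)


end
end
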